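/- arXiv:2310.04141 — 2 statements merged into one kernel-verified Lean document; each statement's English description precedes it below -/
import Mathlib

section
/- Inner estimation of the distributionally robust safe set (Proposition 1): Fix a family B of Borel probability measures on W and define for each m ∈ [M] the set X_m := { x ∈ 𝒳 : sup_{Q ∈ B} CVaR_β^Q[ b_m + A_mᵀ w + d_min − A_mᵀ C x ] ≤ 0 }, where g(x, w) := d_min − dist(Cx, O_w). Then for every x ∈ ∪_{m=1}^M X_m it holds that sup_{Q ∈ B} CVaR_β^Q[ g(x, w) ] ≤ 0. -/
open MeasureTheory RealInnerProductSpace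

/-- Conditional value-at-risk via the Rockafellar–Uryasev infimum formula. -/
noncomputable def cvar {Ω : Type*} [MeasurableSpace Ω] (μ : Measure Ω) (β : ℝ) (Z : Ω → ℝ) : ℝ :=
  ⨅ t : ℝ, (t + β⁻¹ * ∫ ω, max (Z ω - t) 0 ∂μ)

theorem inner_estimate_DR_safe_set {nx np M : ℕ}
    (W : Set (EuclideanSpace ℝ (Fin np))) (hW : IsCompact W)
    (X : Set (EuclideanSpace ℝ (Fin nx)))
    (C : EuclideanSpace ℝ (Fin nx) →ₗ[ℝ] EuclideanSpace ℝ (Fin np))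
    (A : Fin M → EuclideanSpace ℝ (Fin np)) (b : Fin M → ℝ)
    (hA : ∀ m, ‖A m‖ = 1)
    (hOne : ({p : EuclideanSpace ℝ (Fin np) | ∀ m', ⟪A m', p⟫ ≤ b m'}).Nonempty)
    (hOc : IsCompact {p : EuclideanSpace ℝ (Fin np) | ∀ m', ⟪A m', p⟫ ≤ b m'})
    (dmin β : ℝ) (hd : 0 < dmin) (hβ : β ∈ Set.Ioo (0 : ℝ) 1)
    (B : Set (Measure (EuclideanSpace ℝ (Fin np))))
    (hB : ∀ Q ∈ B, IsProbabilityMeasure Q ∧ Q Wᶜ = 0)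
    (x : EuclideanSpace ℝ (Fin nx)) (hx : x ∈ X)
    (hm : ∃ m : Fin M, ∀ Q ∈ B,
      cvar Q β (fun w => b m + ⟪A m, w⟫ + dmin - ⟪A m, C x⟫) ≤ 0) :
    ∀ Q ∈ B, cvar Q β (fun w => dmin - Metric.infDist (C x)
      ((fun p => p + w) '' {p : EuclideanSpace ℝ (Fin np) | ∀ m', ⟪A m', p⟫ ≤ b m'})) ≤ 0 := by
  intro Q hQ
  obtain ⟨hP, hQW⟩ := hB Q hQ
  obtain ⟨m, hmle⟩ := hm
  set O : Set (EuclideanSpace ℝ (Fin np)) :=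
    {p : EuclideanSpace ℝ (Fin np) | ∀ m', ⟪A m', p⟫ ≤ b m'} with hO
  set Z : EuclideanSpace ℝ (Fin np) → ℝ :=
    fun w => b m + ⟪A m, w⟫ + dmin - ⟪A m, C x⟫ with hZ
  set G : EuclideanSpace ℝ (Fin np) → ℝ :=
    fun w => dmin - Metric.infDist (C x) ((fun p => p + w) '' O) with hG
  -- rewrite G via translation invariance of infDist
  have hiso : ∀ w : EuclideanSpace ℝ (Fin np), Isometry (fun p : EuclideanSpace ℝ (Fin np) => p + w) :=
    fun w => Isometry.of_dist_eq fun a c => dist_add_right a c w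
  have hGeq : ∀ w, G w = dmin - Metric.infDist (C x - w) O := by
    intro w
    have h1 : Metric.infDist (C x) ((fun p => p + w) '' O)
        = Metric.infDist ((fun p : EuclideanSpace ℝ (Fin np) => p + w) (C x - w))
          ((fun p => p + w) '' O) := by
      congr 1
      simp
    rw [hG]
    simp only [h1, Metric.infDist_image (hiso w)]
  -- continuity
  have hGcont : Continuous G := by
    have : Continuous fun w : EuclideanSpace ℝ (Fin np) =>
        dmin - Metric.infDist (C x - w) O :=
      continuous_const.sub ((Metric.continuous_infDist_pt O).comp (continuous_const.sub continuous_id))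
    exact (funext hGeq ▸ this)
  have hZcont : Continuous Z := by
    apply Continuous.sub _ continuous_const
    exact ((continuous_const.add (continuous_const.inner continuous_id)).add continuous_const)
  -- a.e. membership in W
  have haeW : ∀ᵐ w ∂Q, w ∈ W := by
    rw [MeasureTheory.ae_iff]
    exact hQW
  -- W nonempty
  have hWne : W.Nonempty := by
    by_contra h
    rw [Set.not_nonempty_iff_eq_empty] at h
    have : Q Set.univ = 0 := by
      simpa [h] using hQW
    simp [hP.measure_univ] at this
  -- generic integrability of continuous functions
  have hint : ∀ f : EuclideanSpace ℝ (Fin np) → ℝ, Continuous f → Integrable f Q := by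
    intro f hf
    obtain ⟨Cb, hCb⟩ := hW.exists_bound_of_continuousOn hf.continuousOn
    exact (integrable_const Cb).mono' hf.aestronglyMeasurable
      (haeW.mono fun w hw => by simpa using hCb w hw)
  have hintZ : ∀ t : ℝ, Integrable (fun w => max (Z w - t) 0) Q :=
    fun t => hint _ ((hZcont.sub continuous_const).max continuous_const)
  have hintG : ∀ t : ℝ, Integrable (fun w => max (G w - t) 0) Q :=
    fun t => hint _ ((hGcont.sub continuous_const).max continuous_const)
  -- pointwise G ≤ Z
  have hGZ : ∀ w, G w ≤ Z w := by
    intro w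
    have hns : ((fun p => p + w) '' O).Nonempty := hOne.image _
    have hkey : ⟪A m, C x⟫ - b m - ⟪A m, w⟫ ≤ Metric.infDist (C x) ((fun p => p + w) '' O) := by
      rw [Metric.infDist_eq_iInf]
      have : Nonempty ((fun p => p + w) '' O : Set (EuclideanSpace ℝ (Fin np))) := hns.to_subtype
      refine le_ciInf fun ⟨y, hy⟩ => ?_
      obtain ⟨p, hp, rfl⟩ := hy
      have h1 : ⟪A m, C x⟫ - b m - ⟪A m, w⟫ ≤ ⟪A m, C x - (p + w)⟫ := by
        have := hp m
        rw [inner_sub_right, inner_add_right]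
        linarith
      have h2 : ⟪A m, C x - (p + w)⟫ ≤ ‖A m‖ * ‖C x - (p + w)‖ := real_inner_le_norm _ _
      rw [dist_eq_norm]
      calc ⟪A m, C x⟫ - b m - ⟪A m, w⟫ ≤ ‖A m‖ * ‖C x - (p + w)‖ := h1.trans h2
        _ = ‖C x - (p + w)‖ := by rw [hA m, one_mul]
    simp only [hG, hZ]
    linarith
  -- lower bound for G on W
  obtain ⟨w₀, hw₀, hmin⟩ := hW.exists_isMinOn hWne hGcont.continuousOn
  set c : ℝ := G w₀ with hc
  have hβ0 : (0:ℝ) < β⁻¹ := inv_pos.mpr hβ.1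
  have hβ1 : (1:ℝ) ≤ β⁻¹ := one_le_inv_iff₀.mpr ⟨hβ.1, hβ.2.le⟩
  -- BddBelow of the family defining cvar Q β G
  have hbdd : BddBelow (Set.range fun t : ℝ => t + β⁻¹ * ∫ w, max (G w - t) 0 ∂Q) := by
    refine ⟨c, ?_⟩
    rintro _ ⟨t, rfl⟩
    have hnn : 0 ≤ ∫ w, max (G w - t) 0 ∂Q :=
      integral_nonneg fun w => le_max_right _ _
    dsimp only
    rcases le_or_gt c t with h | h
    · exact le_trans h (le_add_of_nonneg_right (mul_nonneg hβ0.le hnn))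
    · have hle : (c - t : ℝ) ≤ ∫ w, max (G w - t) 0 ∂Q := by
        have : ∫ _w, (c - t) ∂Q ≤ ∫ w, max (G w - t) 0 ∂Q := by
          refine integral_mono_of_nonneg (Filter.Eventually.of_forall fun w => by
            simp only [Pi.zero_apply]; linarith)
            (hintG t) (haeW.mono fun w hw => ?_)
          have : c ≤ G w := hmin hw
          have : c - t ≤ G w - t := by linarith
          exact this.trans (le_max_left _ _)
        simpa [hP.measure_univ] using this
      have h1 : β⁻¹ * (c - t) ≤ β⁻¹ * ∫ w, max (G w - t) 0 ∂Q :=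
        mul_le_mul_of_nonneg_left hle hβ0.le
      have h2 : 1 * (c - t) ≤ β⁻¹ * (c - t) :=
        mul_le_mul_of_nonneg_right hβ1 (by linarith)
      linarith
  -- monotonicity of cvar
  have hmono : cvar Q β G ≤ cvar Q β Z := by
    unfold cvar
    refine ciInf_mono hbdd fun t => ?_
    have : ∫ w, max (G w - t) 0 ∂Q ≤ ∫ w, max (Z w - t) 0 ∂Q := by
      refine integral_mono_of_nonneg (Filter.Eventually.of_forall fun w => le_max_right _ _)
        (hintZ t) (Filter.Eventually.of_forall fun w => ?_)
      exact max_le_max (by linarith [hGZ w]) le_rfl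
    nlinarith
  exact hmono.trans (hmle Q hQ)
end

section
/- Worst-case CVaR of an affine loss over a Wasserstein ball is Lipschitz-inflated: for a vector a ∈ ℝⁿ and Borel probability measures μ, ν on ℝⁿ with d_W(μ, ν) ≤ θ, one has CVaR_β^ν[aᵀw] ≤ CVaR_β^μ[aᵀw] + β⁻¹ ‖a‖ θ. -/
open MeasureTheory RealInnerProductSpace

/-- The 1-Wasserstein distance, as the infimum over couplings of the expected distance. -/
noncomputable def wassersteinDist {E : Type*} [MeasurableSpace E] [NormedAddCommGroup E]
    (μ ν : Measure E) : ℝ :=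
  sInf {r : ℝ | ∃ γ : Measure (E × E), IsProbabilityMeasure γ ∧
    γ.map Prod.fst = μ ∧ γ.map Prod.snd = ν ∧ r = ∫ p, ‖p.1 - p.2‖ ∂γ}

theorem cvar_affine_wasserstein_inflation {n : ℕ}
    (a : EuclideanSpace ℝ (Fin n)) (β θ : ℝ) (hβ : β ∈ Set.Ioo (0 : ℝ) 1) (hθ : 0 ≤ θ)
    (W : Set (EuclideanSpace ℝ (Fin n))) (hW : IsCompact W)
    (μ ν : Measure (EuclideanSpace ℝ (Fin n)))
    [IsProbabilityMeasure μ] [IsProbabilityMeasure ν]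
    (hμ : μ Wᶜ = 0) (hν : ν Wᶜ = 0)
    (h : wassersteinDist μ ν ≤ θ) :
    cvar ν β (fun w => ⟪a, w⟫) ≤ cvar μ β (fun w => ⟪a, w⟫) + β⁻¹ * ‖a‖ * θ := by
  obtain ⟨hβ0, hβ1⟩ := hβ
  have hβi0 : (0:ℝ) < β⁻¹ := by positivity
  have hβi1 : (1:ℝ) ≤ β⁻¹ := by
    have h2 : β * β⁻¹ = 1 := mul_inv_cancel₀ hβ0.ne'
    nlinarith
  -- a bound on the norm of points of W
  obtain ⟨R0, hR0⟩ := hW.isBounded.exists_norm_le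
  set R : ℝ := max R0 0 with hRdef
  have hRnn : (0:ℝ) ≤ R := le_max_right _ _
  have hR : ∀ w ∈ W, ‖w‖ ≤ R := fun w hw => (hR0 w hw).trans (le_max_left _ _)
  set Z : EuclideanSpace ℝ (Fin n) → ℝ := fun w => ⟪a, w⟫ with hZdef
  have hZcont : Continuous Z := Continuous.inner continuous_const continuous_id
  have hZbd : ∀ w ∈ W, |Z w| ≤ ‖a‖ * R := by
    intro w hw
    calc |Z w| ≤ ‖a‖ * ‖w‖ := abs_real_inner_le_norm a w
    _ ≤ ‖a‖ * R := by
        exact mul_le_mul_of_nonneg_left (hR w hw) (norm_nonneg a)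
  -- a.e. membership in W
  have hμW : ∀ᵐ w ∂μ, w ∈ W := mem_ae_iff.mpr hμ
  have hνW : ∀ᵐ w ∂ν, w ∈ W := mem_ae_iff.mpr hν
  -- G t = the loss function inside the integral
  set G : ℝ → EuclideanSpace ℝ (Fin n) → ℝ := fun t w => max (Z w - t) 0 with hGdef
  have hGcont : ∀ t, Continuous (G t) := fun t =>
    ((hZcont.sub continuous_const).max continuous_const)
  have hGbd : ∀ t w, w ∈ W → |G t w| ≤ ‖a‖ * R + |t| := by
    intro t w hw
    have h1 : (0:ℝ) ≤ G t w := le_max_right _ _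
    have h2 : G t w ≤ |Z w - t| := max_le (le_abs_self _) (abs_nonneg _)
    have h3 : |Z w - t| ≤ |Z w| + |t| := abs_sub _ _
    have := hZbd w hw
    rw [abs_of_nonneg h1]; linarith
  -- integrability of G t and Z w.r.t. any prob. measure concentrated on W
  have hGint : ∀ (t : ℝ) (κ : Measure (EuclideanSpace ℝ (Fin n))) [IsProbabilityMeasure κ],
      (∀ᵐ w ∂κ, w ∈ W) → Integrable (G t) κ := by
    intro t κ _ hκ
    refine (integrable_const (‖a‖ * R + |t|)).mono' (hGcont t).aestronglyMeasurable ?_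
    filter_upwards [hκ] with w hw
    simpa using hGbd t w hw
  have hZint : Integrable Z ν := by
    refine (integrable_const (‖a‖ * R)).mono' hZcont.aestronglyMeasurable ?_
    filter_upwards [hνW] with w hw
    simpa using hZbd w hw
  set c : ℝ := β⁻¹ * ‖a‖ * θ with hcdef
  set Fm : Measure (EuclideanSpace ℝ (Fin n)) → ℝ → ℝ :=
    fun κ t => t + β⁻¹ * ∫ w, G t w ∂κ with hFmdef
  -- lower bound for Fm ν
  have hbdd : ∀ t, -(β⁻¹ * (‖a‖ * R)) ≤ Fm ν t := by
    intro t
    have hC : (0:ℝ) ≤ β⁻¹ * (‖a‖ * R) := by positivity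
    rcases le_or_gt 0 t with ht | ht
    · have h1 : (0:ℝ) ≤ ∫ w, G t w ∂ν :=
        integral_nonneg (fun w => le_max_right _ _)
      have : (0:ℝ) ≤ β⁻¹ * ∫ w, G t w ∂ν := by positivity
      simp only [hFmdef]; linarith
    · have hint1 : Integrable (fun w => Z w - t) ν := hZint.sub (integrable_const t)
      have h1 : ∫ w, (Z w - t) ∂ν ≤ ∫ w, G t w ∂ν :=
        integral_mono hint1 (hGint t ν hνW) (fun w => le_max_left _ _)
      have h2 : ∫ w, (Z w - t) ∂ν = (∫ w, Z w ∂ν) - t := by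
        rw [integral_sub hZint (integrable_const t)]
        simp
      have h3 : -(‖a‖ * R) ≤ ∫ w, Z w ∂ν := by
        have := integral_mono_ae (integrable_const (-(‖a‖ * R))) hZint ?_
        · simpa using this
        · filter_upwards [hνW] with w hw
          have := hZbd w hw
          have := abs_le.mp this
          linarith [this.1]
      have key : (∫ w, Z w ∂ν) - t ≤ ∫ w, G t w ∂ν := by rw [← h2]; exact h1
      have hIZ : β⁻¹ * ((∫ w, Z w ∂ν) - t) ≤ β⁻¹ * ∫ w, G t w ∂ν :=
        mul_le_mul_of_nonneg_left key hβi0.le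
      simp only [hFmdef]
      nlinarith [h3, ht, hβi1, mul_le_mul_of_nonneg_left h3 hβi0.le]
  -- the key comparison for each coupling
  have hcouple : ∀ (t : ℝ) (γ : Measure (EuclideanSpace ℝ (Fin n) × EuclideanSpace ℝ (Fin n)))
      [IsProbabilityMeasure γ], γ.map Prod.fst = μ → γ.map Prod.snd = ν →
      (∫ w, G t w ∂ν) ≤ (∫ w, G t w ∂μ) + ‖a‖ * ∫ p, ‖p.1 - p.2‖ ∂γ := by
    intro t γ _ hγ1 hγ2
    have hWm : MeasurableSet W := hW.isClosed.measurableSet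
    have hγW1 : ∀ᵐ p ∂γ, p.1 ∈ W := by
      rw [ae_iff]
      have : {p : EuclideanSpace ℝ (Fin n) × EuclideanSpace ℝ (Fin n) | ¬ p.1 ∈ W}
          = Prod.fst ⁻¹' Wᶜ := rfl
      rw [this, ← Measure.map_apply measurable_fst hWm.compl, hγ1]
      exact hμ
    have hγW2 : ∀ᵐ p ∂γ, p.2 ∈ W := by
      rw [ae_iff]
      have : {p : EuclideanSpace ℝ (Fin n) × EuclideanSpace ℝ (Fin n) | ¬ p.2 ∈ W}
          = Prod.snd ⁻¹' Wᶜ := rfl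
      rw [this, ← Measure.map_apply measurable_snd hWm.compl, hγ2]
      exact hν
    have int1 : Integrable (fun p => G t p.1) γ := by
      refine (integrable_const (‖a‖ * R + |t|)).mono'
        ((hGcont t).comp continuous_fst).aestronglyMeasurable ?_
      filter_upwards [hγW1] with p hp
      simpa using hGbd t p.1 hp
    have int2 : Integrable (fun p => G t p.2) γ := by
      refine (integrable_const (‖a‖ * R + |t|)).mono'
        ((hGcont t).comp continuous_snd).aestronglyMeasurable ?_
      filter_upwards [hγW2] with p hp
      simpa using hGbd t p.2 hp
    have intd : Integrable (fun p => ‖p.1 - p.2‖) γ := by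
      refine (integrable_const (R + R)).mono'
        ((continuous_fst.sub continuous_snd).norm).aestronglyMeasurable ?_
      filter_upwards [hγW1, hγW2] with p hp1 hp2
      have : ‖p.1 - p.2‖ ≤ ‖p.1‖ + ‖p.2‖ := norm_sub_le _ _
      simp only [Real.norm_eq_abs, abs_of_nonneg (norm_nonneg (p.1 - p.2))]
      linarith [hR p.1 hp1, hR p.2 hp2]
    have e1 : ∫ w, G t w ∂μ = ∫ p, G t p.1 ∂γ := by
      rw [← hγ1, integral_map measurable_fst.aemeasurable (hGcont t).aestronglyMeasurable]
    have e2 : ∫ w, G t w ∂ν = ∫ p, G t p.2 ∂γ := by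
      rw [← hγ2, integral_map measurable_snd.aemeasurable (hGcont t).aestronglyMeasurable]
    have hpt : ∀ p : EuclideanSpace ℝ (Fin n) × EuclideanSpace ℝ (Fin n),
        G t p.2 ≤ G t p.1 + ‖a‖ * ‖p.1 - p.2‖ := by
      intro p
      have h1 : |G t p.2 - G t p.1| ≤ |Z p.2 - Z p.1| := by
        have := abs_max_sub_max_le_abs (Z p.2 - t) (Z p.1 - t) 0
        simpa [sub_sub_sub_cancel_right] using this
      have h2 : Z p.2 - Z p.1 = ⟪a, p.2 - p.1⟫ := by
        simp only [hZdef, inner_sub_right]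
      have h3 : |Z p.2 - Z p.1| ≤ ‖a‖ * ‖p.2 - p.1‖ := by
        rw [h2]; exact abs_real_inner_le_norm a _
      rw [norm_sub_rev p.1 p.2]
      have := (abs_le.mp (h1.trans h3)).2
      linarith
    have hmono : ∫ p, G t p.2 ∂γ ≤ ∫ p, (G t p.1 + ‖a‖ * ‖p.1 - p.2‖) ∂γ :=
      integral_mono int2 (int1.add (intd.const_mul ‖a‖)) hpt
    rw [e1, e2]
    calc ∫ p, G t p.2 ∂γ ≤ ∫ p, (G t p.1 + ‖a‖ * ‖p.1 - p.2‖) ∂γ := hmono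
      _ = (∫ p, G t p.1 ∂γ) + ‖a‖ * ∫ p, ‖p.1 - p.2‖ ∂γ := by
          rw [integral_add int1 (intd.const_mul ‖a‖), integral_const_mul ‖a‖ (fun p : EuclideanSpace ℝ (Fin n) × EuclideanSpace ℝ (Fin n) => ‖p.1 - p.2‖)]
  -- the coupling set is nonempty
  have hSne : Set.Nonempty {r : ℝ | ∃ γ : Measure (EuclideanSpace ℝ (Fin n) × EuclideanSpace ℝ (Fin n)),
      IsProbabilityMeasure γ ∧ γ.map Prod.fst = μ ∧ γ.map Prod.snd = ν ∧
      r = ∫ p, ‖p.1 - p.2‖ ∂γ} := by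
    refine ⟨∫ p, ‖p.1 - p.2‖ ∂(μ.prod ν), μ.prod ν, inferInstance, ?_, ?_, rfl⟩
    · rw [Measure.map_fst_prod]; simp
    · rw [Measure.map_snd_prod]; simp
  -- key pointwise-in-t inequality
  have hkey : ∀ t, Fm ν t ≤ Fm μ t + c := by
    intro t
    have hI : (∫ w, G t w ∂ν) ≤ (∫ w, G t w ∂μ) + ‖a‖ * θ := by
      refine le_of_forall_pos_le_add ?_
      intro ε hε
      have hlt : wassersteinDist μ ν < θ + ε / (‖a‖ + 1) := by
        have : (0:ℝ) < ε / (‖a‖ + 1) := by positivity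
        linarith
      obtain ⟨r, hrS, hrlt⟩ := exists_lt_of_csInf_lt hSne hlt
      obtain ⟨γ, hγp, hγ1, hγ2, hrdef⟩ := hrS
      have := hcouple t γ hγ1 hγ2
      rw [← hrdef] at this
      have hna : (0:ℝ) ≤ ‖a‖ := norm_nonneg a
      have h4 : ‖a‖ * r ≤ ‖a‖ * (θ + ε / (‖a‖ + 1)) :=
        mul_le_mul_of_nonneg_left hrlt.le hna
      have h5 : ‖a‖ * (ε / (‖a‖ + 1)) ≤ ε := by
        rw [mul_div_assoc'] ; rw [div_le_iff₀ (by positivity)]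
        nlinarith
      nlinarith
    simp only [hFmdef, hcdef]
    have := mul_le_mul_of_nonneg_left hI hβi0.le
    nlinarith
  -- assemble
  have hble : BddBelow (Set.range (fun t => Fm ν t)) :=
    ⟨-(β⁻¹ * (‖a‖ * R)), by rintro x ⟨t, rfl⟩; exact hbdd t⟩
  have hfinal : (⨅ t, Fm ν t) - c ≤ ⨅ t, Fm μ t := by
    refine le_ciInf fun t => ?_
    have h1 : (⨅ t, Fm ν t) ≤ Fm ν t := ciInf_le hble t
    linarith [hkey t]
  show (⨅ t : ℝ, (t + β⁻¹ * ∫ w, G t w ∂ν)) ≤ (⨅ t : ℝ, (t + β⁻¹ * ∫ w, G t w ∂μ)) + c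
  have e1 : (⨅ t : ℝ, (t + β⁻¹ * ∫ w, G t w ∂ν)) = ⨅ t, Fm ν t := rfl
  have e2 : (⨅ t : ℝ, (t + β⁻¹ * ∫ w, G t w ∂μ)) = ⨅ t, Fm μ t := rfl
  rw [e1, e2]; linarith
end
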